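/- For any n×n real matrix A, γ₂(A) ≥ (1/n)·‖A‖_tr, where ‖A‖_tr is the trace norm (sum of singular values) of A. -/

import Mathlib

open scoped BigOperators

noncomputable def rowMax {α : Type*} [Fintype α] {r : ℕ} (U : Matrix α (Fin r) ℝ) : ℝ :=
  ⨆ i, Real.sqrt (∑ j, (U i j) ^ 2)

noncomputable def colMax {β : Type*} [Fintype β] {r : ℕ} (V : Matrix (Fin r) β ℝ) : ℝ :=
  ⨆ j, Real.sqrt (∑ i, (V i j) ^ 2)

/-- The γ₂ factorization norm of a real matrix. -/
noncomputable def gamma2 {α β : Type*} [Fintype α] [Fintype β] (A : Matrix α β ℝ) : ℝ :=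
  sInf {t : ℝ | ∃ (r : ℕ) (U : Matrix α (Fin r) ℝ) (V : Matrix (Fin r) β ℝ),
    A = U * V ∧ t = rowMax U * colMax V}

/-- The trace norm (sum of singular values) of a square real matrix, defined as the trace
of the positive semidefinite square root of `Aᵀ * A`. -/
noncomputable def traceNorm {n : ℕ} (A : Matrix (Fin n) (Fin n) ℝ) : ℝ :=
  ((Matrix.isHermitian_conjTranspose_mul_self A).eigenvectorUnitary.1 *
    Matrix.diagonal (fun i => Real.sqrt ((Matrix.isHermitian_conjTranspose_mul_self A).eigenvalues i)) *
    (star (Matrix.isHermitian_conjTranspose_mul_self A).eigenvectorUnitary : Matrix (Fin n) (Fin n) ℝ)).trace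

open Matrix in
theorem traceNorm_eq_sum {n : ℕ} (A : Matrix (Fin n) (Fin n) ℝ) :
    traceNorm A
      = ∑ i, Real.sqrt ((Matrix.posSemidef_conjTranspose_mul_self A).1.eigenvalues i) := by
  set hA := Matrix.posSemidef_conjTranspose_mul_self A
  rw [traceNorm, Matrix.trace_mul_cycle]
  have h1 : (star hA.1.eigenvectorUnitary.1 : Matrix (Fin n) (Fin n) ℝ)
      * hA.1.eigenvectorUnitary.1 = 1 := by
    exact_mod_cast Unitary.coe_star_mul_self hA.1.eigenvectorUnitary
  rw [h1, one_mul, Matrix.trace_diagonal]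

theorem bessel_dot {n : ℕ} {ι : Type*} [Fintype ι] (w : ι → EuclideanSpace ℝ (Fin n))
    (hw : Orthonormal ℝ w) (x : Fin n → ℝ) :
    ∑ i, (∑ k, w i k * x k) ^ 2 ≤ ∑ k, x k ^ 2 := by
  have hb := hw.sum_inner_products_le (𝕜 := ℝ)
      ((WithLp.equiv 2 (Fin n → ℝ)).symm x) (s := Finset.univ)
  simpa [PiLp.inner_apply, RCLike.inner_apply, EuclideanSpace.norm_eq,
    Real.sq_sqrt, Finset.sum_nonneg (fun k _ => sq_nonneg (x k)), sq_abs, mul_comm] using hb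

theorem bessel_dot' {n : ℕ} {p : Fin n → Prop} [DecidablePred p] (w : Fin n → Fin n → ℝ)
    (hw0 : ∀ i, ¬ p i → w i = 0)
    (hw : Orthonormal ℝ (fun i : {i // p i} =>
      ((WithLp.equiv 2 (Fin n → ℝ)).symm (w i.1) : EuclideanSpace ℝ (Fin n))))
    (x : Fin n → ℝ) :
    ∑ i, (∑ k, w i k * x k) ^ 2 ≤ ∑ k, x k ^ 2 := by
  have h1 : ∑ i, (∑ k, w i k * x k) ^ 2
      = ∑ i ∈ Finset.univ.filter p, (∑ k, w i k * x k) ^ 2 := by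
    rw [Finset.sum_filter_of_ne]
    intro i _ hne
    by_contra hp
    simp [hw0 i hp] at hne
  have h2 : ∑ i ∈ Finset.univ.filter p, (∑ k, w i k * x k) ^ 2
      = ∑ i : {i // p i}, (∑ k, w i.1 k * x k) ^ 2 := by
    rw [Finset.sum_subtype (p := p) (Finset.univ.filter p) (by simp)
      (fun i => (∑ k, w i k * x k) ^ 2)]
  rw [h1, h2]
  simpa using bessel_dot _ hw x

open Matrix in
theorem eig_dot {n : ℕ} (A : Matrix (Fin n) (Fin n) ℝ)
    (hH : (Aᴴ * A).IsHermitian)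
    (v : Fin n → (Fin n → ℝ)) (hv : ∀ k, v k = ⇑(hH.eigenvectorBasis k)) (i j : Fin n) :
    dotProduct (A.mulVec (v i)) (A.mulVec (v j))
      = hH.eigenvalues j * (if i = j then 1 else 0) := by
  have h1 : dotProduct (v i) ((Aᴴ * A).mulVec (v j))
      = dotProduct (A.mulVec (v i)) (A.mulVec (v j)) := by
    rw [← Matrix.mulVec_mulVec, Matrix.dotProduct_mulVec, Matrix.vecMul_conjTranspose]
    simp
  have h2 : dotProduct (v i) (v j) = if i = j then 1 else 0 := by
    have := orthonormal_iff_ite.mp hH.eigenvectorBasis.orthonormal i j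
    rw [hv i, hv j]
    simpa [PiLp.inner_apply, RCLike.inner_apply, dotProduct, mul_comm] using this
  rw [← h1, hv j, hH.mulVec_eigenvectorBasis, dotProduct_smul, ← hv j, h2]
  simp [mul_comm]

open Matrix in
set_option maxHeartbeats 800000 in
theorem key_ineq {n r : ℕ} (A : Matrix (Fin n) (Fin n) ℝ)
    (U : Matrix (Fin n) (Fin r) ℝ) (V : Matrix (Fin r) (Fin n) ℝ) (hA : A = U * V) :
    traceNorm A ≤ n * (rowMax U * colMax V) := by
  classical
  set a := rowMax U with ha_def
  set b := colMax V with hb_def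
  have ha0 : 0 ≤ a := Real.iSup_nonneg fun i => Real.sqrt_nonneg _
  have hb0 : 0 ≤ b := Real.iSup_nonneg fun j => Real.sqrt_nonneg _
  have hrow : ∀ i, ∑ j, U i j ^ 2 ≤ a ^ 2 := by
    intro i
    have h1 : Real.sqrt (∑ j, U i j ^ 2) ≤ a := by
      rw [ha_def, rowMax]
      exact le_ciSup (f := fun i => Real.sqrt (∑ j, U i j ^ 2))
        (Set.Finite.bddAbove (Set.finite_range _)) i
    calc ∑ j, U i j ^ 2 = Real.sqrt (∑ j, U i j ^ 2) ^ 2 := by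
          rw [Real.sq_sqrt (Finset.sum_nonneg fun j _ => sq_nonneg _)]
      _ ≤ a ^ 2 := pow_le_pow_left₀ (Real.sqrt_nonneg _) h1 2
  have hcol : ∀ j, ∑ i, V i j ^ 2 ≤ b ^ 2 := by
    intro j
    have h1 : Real.sqrt (∑ i, V i j ^ 2) ≤ b := by
      rw [hb_def, colMax]
      exact le_ciSup (f := fun j => Real.sqrt (∑ i, V i j ^ 2))
        (Set.Finite.bddAbove (Set.finite_range _)) j
    calc ∑ i, V i j ^ 2 = Real.sqrt (∑ i, V i j ^ 2) ^ 2 := by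
          rw [Real.sq_sqrt (Finset.sum_nonneg fun i _ => sq_nonneg _)]
      _ ≤ b ^ 2 := pow_le_pow_left₀ (Real.sqrt_nonneg _) h1 2
  set hPSD := Matrix.posSemidef_conjTranspose_mul_self A with hPSD_def
  set hH := hPSD.1 with hH_def
  set lam := hH.eigenvalues with lam_def
  have hlam0 : ∀ i, 0 ≤ lam i := hPSD.eigenvalues_nonneg
  set v : Fin n → (Fin n → ℝ) := fun k => ⇑(hH.eigenvectorBasis k) with hv_def
  have hdot : ∀ i j, dotProduct (A.mulVec (v i)) (A.mulVec (v j))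
      = lam j * (if i = j then 1 else 0) := eig_dot A hH v (fun k => rfl)
  set w : Fin n → (Fin n → ℝ) :=
    fun i => if lam i = 0 then 0 else (Real.sqrt (lam i))⁻¹ • (A.mulVec (v i)) with hw_def
  have hw_sqrt : ∀ i, Real.sqrt (lam i) * Real.sqrt (lam i) = lam i :=
    fun i => Real.mul_self_sqrt (hlam0 i)
  have hw_dot : ∀ i, dotProduct (w i) (A.mulVec (v i)) = Real.sqrt (lam i) := by
    intro i
    by_cases h : lam i = 0
    · simp [hw_def, h]
    · have hs : Real.sqrt (lam i) ≠ 0 := by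
        simpa [Real.sqrt_eq_zero' , not_or] using
          (Real.sqrt_ne_zero (hlam0 i)).mpr h
      simp only [hw_def, if_neg h, smul_dotProduct, smul_eq_mul]
      rw [hdot i i]
      field_simp
      simp [Real.sq_sqrt (hlam0 i)]
  -- orthonormality of the w family on the nonzero eigenvalues
  have hW : Orthonormal ℝ (fun i : {i // lam i ≠ 0} =>
      ((WithLp.equiv 2 (Fin n → ℝ)).symm (w i.1) : EuclideanSpace ℝ (Fin n))) := by
    rw [orthonormal_iff_ite]
    intro i j
    have hinner : (inner ℝ ((WithLp.equiv 2 (Fin n → ℝ)).symm (w i.1))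
        ((WithLp.equiv 2 (Fin n → ℝ)).symm (w j.1)) : ℝ)
        = dotProduct (w i.1) (w j.1) := by
      simp [PiLp.inner_apply, RCLike.inner_apply, dotProduct]
      exact Finset.sum_congr rfl fun x _ => mul_comm _ _
    rw [hinner]
    simp only [hw_def, if_neg i.2, if_neg j.2, smul_dotProduct,
      dotProduct_smul, smul_eq_mul]
    rw [hdot i.1 j.1]
    by_cases h : i = j
    · subst h
      simp only [if_pos rfl, mul_one]
      have hs : Real.sqrt (lam i.1) ≠ 0 :=
        fun hc => i.2 (by rw [← hw_sqrt i.1, hc, mul_zero])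
      field_simp
      exact (Real.sq_sqrt (hlam0 i.1)).symm
    · have h' : i.1 ≠ j.1 := fun hc => h (Subtype.ext hc)
      simp [if_neg h', if_neg h]
  -- orthonormality of v family (trivial predicate)
  have hVfam : Orthonormal ℝ (fun i : Fin n =>
      ((WithLp.equiv 2 (Fin n → ℝ)).symm (v i) : EuclideanSpace ℝ (Fin n))) :=
    hH.eigenvectorBasis.orthonormal
  -- main computation
  set pvec : Fin n → (Fin r → ℝ) := fun i => Matrix.vecMul (w i) U with hp_def
  set qvec : Fin n → (Fin r → ℝ) := fun i => V.mulVec (v i) with hq_def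
  have step1 : traceNorm A = ∑ i, dotProduct (pvec i) (qvec i) := by
    rw [traceNorm_eq_sum]
    refine Finset.sum_congr rfl fun i _ => ?_
    rw [← hw_dot i]
    rw [show A.mulVec (v i) = U.mulVec (V.mulVec (v i)) by
      rw [Matrix.mulVec_mulVec, ← hA]]
    rw [Matrix.dotProduct_mulVec]
  set P : Fin n → ℝ := fun i => ∑ j, pvec i j ^ 2 with hP_def
  set Q : Fin n → ℝ := fun i => ∑ j, qvec i j ^ 2 with hQ_def
  have hPnn : ∀ i, 0 ≤ P i := fun i => Finset.sum_nonneg fun j _ => sq_nonneg _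
  have hQnn : ∀ i, 0 ≤ Q i := fun i => Finset.sum_nonneg fun j _ => sq_nonneg _
  have step2 : ∀ i, dotProduct (pvec i) (qvec i)
      ≤ Real.sqrt (P i) * Real.sqrt (Q i) := by
    intro i
    rw [← Real.sqrt_mul (hPnn i)]
    calc dotProduct (pvec i) (qvec i)
        ≤ |dotProduct (pvec i) (qvec i)| := le_abs_self _
      _ = Real.sqrt ((dotProduct (pvec i) (qvec i)) ^ 2) :=
          (Real.sqrt_sq_eq_abs _).symm
      _ ≤ Real.sqrt (P i * Q i) := by
          apply Real.sqrt_le_sqrt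
          exact Finset.sum_mul_sq_le_sq_mul_sq Finset.univ (pvec i) (qvec i)
  have step3 : ∑ i, Real.sqrt (P i) * Real.sqrt (Q i)
      ≤ Real.sqrt (∑ i, P i) * Real.sqrt (∑ i, Q i) := by
    have hcs : (∑ i, Real.sqrt (P i) * Real.sqrt (Q i)) ^ 2
        ≤ (∑ i, P i) * (∑ i, Q i) := by
      apply Finset.sum_sq_le_sum_mul_sum_of_sq_eq_mul
      · exact fun i _ => hPnn i
      · exact fun i _ => hQnn i
      · intro i _
        rw [mul_pow, Real.sq_sqrt (hPnn i), Real.sq_sqrt (hQnn i)]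
    have hnn : 0 ≤ ∑ i, Real.sqrt (P i) * Real.sqrt (Q i) :=
      Finset.sum_nonneg fun i _ => mul_nonneg (Real.sqrt_nonneg _) (Real.sqrt_nonneg _)
    calc ∑ i, Real.sqrt (P i) * Real.sqrt (Q i)
        = Real.sqrt ((∑ i, Real.sqrt (P i) * Real.sqrt (Q i)) ^ 2) := by
          rw [Real.sqrt_sq hnn]
      _ ≤ Real.sqrt ((∑ i, P i) * (∑ i, Q i)) := Real.sqrt_le_sqrt hcs
      _ = Real.sqrt (∑ i, P i) * Real.sqrt (∑ i, Q i) := by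
          rw [Real.sqrt_mul (Finset.sum_nonneg fun i _ => hPnn i)]
  have hsumP : ∑ i, P i ≤ n * a ^ 2 := by
    have h1 : ∑ i, P i = ∑ j, ∑ i, (∑ k, w i k * U k j) ^ 2 := by
      rw [Finset.sum_comm]
      refine Finset.sum_congr rfl fun i _ => ?_
      refine Finset.sum_congr rfl fun j _ => ?_
      rw [hp_def]
      rfl
    rw [h1]
    have h2 : ∀ j : Fin r, ∑ i, (∑ k, w i k * U k j) ^ 2 ≤ ∑ k, U k j ^ 2 := by
      intro j
      exact bessel_dot' w (fun i hi => by simp [hw_def, not_not.mp hi]) hW (fun k => U k j)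
    calc ∑ j, ∑ i, (∑ k, w i k * U k j) ^ 2 ≤ ∑ j : Fin r, ∑ k, U k j ^ 2 :=
          Finset.sum_le_sum fun j _ => h2 j
      _ = ∑ k, ∑ j, U k j ^ 2 := Finset.sum_comm
      _ ≤ ∑ _k : Fin n, a ^ 2 := Finset.sum_le_sum fun k _ => hrow k
      _ = n * a ^ 2 := by simp [mul_comm]
  have hsumQ : ∑ i, Q i ≤ n * b ^ 2 := by
    have h1 : ∑ i, Q i = ∑ k : Fin r, ∑ i, (∑ j, v i j * V k j) ^ 2 := by
      rw [Finset.sum_comm]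
      refine Finset.sum_congr rfl fun i _ => ?_
      refine Finset.sum_congr rfl fun k _ => ?_
      rw [hq_def]
      simp [Matrix.mulVec, dotProduct, mul_comm]
    rw [h1]
    have h2 : ∀ k : Fin r, ∑ i, (∑ j, v i j * V k j) ^ 2 ≤ ∑ j, V k j ^ 2 := by
      intro k
      exact bessel_dot (fun i => (WithLp.equiv 2 (Fin n → ℝ)).symm (v i)) hVfam
        (fun j => V k j)
    calc ∑ k : Fin r, ∑ i, (∑ j, v i j * V k j) ^ 2 ≤ ∑ k : Fin r, ∑ j, V k j ^ 2 :=
          Finset.sum_le_sum fun k _ => h2 k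
      _ = ∑ j, ∑ k, V k j ^ 2 := Finset.sum_comm
      _ ≤ ∑ _j : Fin n, b ^ 2 := Finset.sum_le_sum fun j _ => hcol j
      _ = n * b ^ 2 := by simp [mul_comm]
  calc traceNorm A = ∑ i, dotProduct (pvec i) (qvec i) := step1
    _ ≤ ∑ i, Real.sqrt (P i) * Real.sqrt (Q i) := Finset.sum_le_sum fun i _ => step2 i
    _ ≤ Real.sqrt (∑ i, P i) * Real.sqrt (∑ i, Q i) := step3
    _ ≤ Real.sqrt (n * a ^ 2) * Real.sqrt (n * b ^ 2) := by
        apply mul_le_mul (Real.sqrt_le_sqrt hsumP) (Real.sqrt_le_sqrt hsumQ)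
          (Real.sqrt_nonneg _) (Real.sqrt_nonneg _)
    _ = n * (a * b) := by
        rw [Real.sqrt_mul (by positivity), Real.sqrt_mul (by positivity),
          Real.sqrt_sq ha0, Real.sqrt_sq hb0]
        rw [show Real.sqrt (n : ℝ) * a * (Real.sqrt (n : ℝ) * b)
            = (Real.sqrt (n : ℝ) * Real.sqrt (n : ℝ)) * (a * b) by ring,
          Real.mul_self_sqrt (Nat.cast_nonneg n)]

/-- For any `n × n` real matrix `A`, `γ₂(A) ≥ (1/n) ‖A‖_tr`. -/
theorem gamma2_ge_traceNorm_div {n : ℕ} (A : Matrix (Fin n) (Fin n) ℝ) :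
    gamma2 A ≥ traceNorm A / n := by
  have hmem : ∃ t, t ∈ {t : ℝ | ∃ (r : ℕ) (U : Matrix (Fin n) (Fin r) ℝ)
      (V : Matrix (Fin r) (Fin n) ℝ), A = U * V ∧ t = rowMax U * colMax V} :=
    ⟨rowMax A * colMax (1 : Matrix (Fin n) (Fin n) ℝ), n, A, 1, by rw [mul_one], rfl⟩
  rw [ge_iff_le, gamma2]
  apply le_csInf hmem
  rintro t ⟨r, U, V, hA, rfl⟩
  have hkey := key_ineq A U V hA
  have ha0 : (0:ℝ) ≤ rowMax U := Real.iSup_nonneg fun i => Real.sqrt_nonneg _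
  have hb0 : (0:ℝ) ≤ colMax V := Real.iSup_nonneg fun j => Real.sqrt_nonneg _
  rcases Nat.eq_zero_or_pos n with h0 | hpos
  · subst h0
    simp only [Nat.cast_zero, div_zero]
    exact mul_nonneg ha0 hb0
  · rw [div_le_iff₀ (by exact_mod_cast hpos)]
    calc traceNorm A ≤ n * (rowMax U * colMax V) := hkey
      _ = rowMax U * colMax V * n := by ring
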